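/- Let N ≥ 2, α, β > 0 with αβ = N², λ, μ > 0, and let T̃ = T̃₁ ∘ T̃₂ with T̃₁(v)(t) = ∫_t^1 (∫_0^s N τ^{N-1} λ v(τ)^α dτ)^{1/N} ds, T̃₂ analogous with μ and β. Let Γ = ∫_{1/4}^{3/4} (∫_{1/4}^s N τ^{N-1} dτ)^{1/N} ds. If v ∈ K ∖ {0} is a fixed point of T̃, where K = {v ∈ C[0,1] : v ≥ 0, min_{[1/4,3/4]} v ≥ (1/4)‖v‖}, then λ^{1/N} μ^{α/N²} (Γ/4)^{1 + α/N} ≤ 1. -/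

import Mathlib

open Set

/-- Supremum norm on `C[0,1]`. -/
noncomputable def supNorm (v : ℝ → ℝ) : ℝ :=
  sSup ((fun t => |v t|) '' Icc (0:ℝ) 1)

/-- Membership in the cone `K ⊂ C[0,1]`. -/
def memK (v : ℝ → ℝ) : Prop :=
  ContinuousOn v (Icc (0:ℝ) 1) ∧ (∀ t ∈ Icc (0:ℝ) 1, 0 ≤ v t) ∧
    ∀ t ∈ Icc (1/4 : ℝ) (3/4), (1/4) * supNorm v ≤ v t

/-- The solution operator with parameter `c` and exponent `γ`. -/
noncomputable def MAopc (N : ℕ) (c γ : ℝ) (v : ℝ → ℝ) : ℝ → ℝ :=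
  fun t => ∫ s in t..(1:ℝ),
    (∫ τ in (0:ℝ)..s, (N:ℝ) * τ ^ (N - 1) * (c * v τ ^ γ)) ^ ((N:ℝ)⁻¹)

/-- The constant `Γ`. -/
noncomputable def Gam (N : ℕ) : ℝ :=
  ∫ s in (1/4 : ℝ)..(3/4), (∫ τ in (1/4 : ℝ)..s, (N:ℝ) * τ ^ (N - 1)) ^ ((N:ℝ)⁻¹)

namespace Stmt13Aux

open MeasureTheory intervalIntegral

/-- inner integrand -/
noncomputable def gg (N : ℕ) (c γ : ℝ) (v : ℝ → ℝ) : ℝ → ℝ :=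
  fun τ => (N:ℝ) * τ ^ (N - 1) * (c * v τ ^ γ)

/-- outer integrand -/
noncomputable def ff (N : ℕ) (c γ : ℝ) (v : ℝ → ℝ) : ℝ → ℝ :=
  fun s => (∫ τ in (0:ℝ)..s, gg N c γ v τ) ^ ((N:ℝ)⁻¹)

lemma MAopc_eq (N : ℕ) (c γ : ℝ) (v : ℝ → ℝ) (t : ℝ) :
    MAopc N c γ v t = ∫ s in t..(1:ℝ), ff N c γ v s := rfl

lemma powInt (N : ℕ) (hN : 2 ≤ N) (a b : ℝ) :
    ∫ τ in a..b, (N:ℝ) * τ ^ (N-1) = b^N - a^N := by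
  rw [intervalIntegral.integral_const_mul, integral_pow]
  have h1 : N - 1 + 1 = N := by omega
  rw [h1, Nat.cast_sub (by omega : 1 ≤ N)]
  have : (N:ℝ) ≠ 0 := by positivity
  push_cast
  field_simp
  rw [sub_add_cancel, mul_div_cancel_left₀ _ this]

lemma Gam_eq (N : ℕ) (hN : 2 ≤ N) :
    Gam N = ∫ s in (1/4:ℝ)..(3/4), (s^N - (1/4:ℝ)^N) ^ ((N:ℝ)⁻¹) := by
  unfold Gam
  apply intervalIntegral.integral_congr
  intro s _
  simp only [powInt N hN]

lemma Gam_nonneg (N : ℕ) (hN : 2 ≤ N) : 0 ≤ Gam N := by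
  rw [Gam_eq N hN]
  apply intervalIntegral.integral_nonneg (by norm_num)
  intro s hs
  apply Real.rpow_nonneg
  have := pow_le_pow_left₀ (by norm_num : (0:ℝ) ≤ 1/4) hs.1 N
  linarith

variable {N : ℕ} {c γ m : ℝ} {v : ℝ → ℝ}

lemma gg_cont (hγ : 0 < γ) (hvc : ContinuousOn v (Icc 0 1)) :
    ContinuousOn (gg N c γ v) (Icc 0 1) :=
  ((continuous_const.mul (continuous_pow _)).continuousOn).mul
    (continuousOn_const.mul (hvc.rpow_const fun _ _ => Or.inr hγ.le))

lemma gg_nonneg (hc : 0 ≤ c) (hv0 : ∀ t ∈ Icc (0:ℝ) 1, 0 ≤ v t) :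
    ∀ τ ∈ Icc (0:ℝ) 1, 0 ≤ gg N c γ v τ := fun τ hτ =>
  mul_nonneg (mul_nonneg (Nat.cast_nonneg N) (pow_nonneg hτ.1 _))
    (mul_nonneg hc (Real.rpow_nonneg (hv0 τ hτ) _))

lemma gg_int (hγ : 0 < γ) (hvc : ContinuousOn v (Icc 0 1)) {a b : ℝ}
    (ha : 0 ≤ a) (hb : b ≤ 1) (hab : a ≤ b) :
    IntervalIntegrable (gg N c γ v) volume a b :=
  ((gg_cont hγ hvc).mono (by rw [uIcc_of_le hab]; exact Icc_subset_Icc ha hb)).intervalIntegrable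

lemma inner_lb (hN : 2 ≤ N) (hc : 0 < c) (hγ : 0 < γ) (hm : 0 ≤ m)
    (hvc : ContinuousOn v (Icc 0 1)) (hv0 : ∀ t ∈ Icc (0:ℝ) 1, 0 ≤ v t)
    (hvm : ∀ t ∈ Icc (1/4:ℝ) (3/4), m ≤ v t)
    {b s : ℝ} (hb1 : 1/4 ≤ b) (hb2 : b ≤ 3/4) (hbs : b ≤ s) (hs1 : s ≤ 1) :
    c * m ^ γ * (b ^ N - (1/4:ℝ)^N) ≤ ∫ τ in (0:ℝ)..s, gg N c γ v τ := by
  have ia : IntervalIntegrable (gg N c γ v) volume 0 (1/4) :=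
    gg_int hγ hvc le_rfl (by norm_num) (by norm_num)
  have ib : IntervalIntegrable (gg N c γ v) volume (1/4) b :=
    gg_int hγ hvc (by norm_num) (by linarith) hb1
  have ic : IntervalIntegrable (gg N c γ v) volume b s :=
    gg_int hγ hvc (by linarith) hs1 hbs
  have e1 : (∫ τ in (0:ℝ)..(1/4), gg N c γ v τ) + (∫ τ in (1/4:ℝ)..b, gg N c γ v τ)
      = ∫ τ in (0:ℝ)..b, gg N c γ v τ :=
    intervalIntegral.integral_add_adjacent_intervals ia ib
  have e2 : (∫ τ in (0:ℝ)..b, gg N c γ v τ) + (∫ τ in b..s, gg N c γ v τ)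
      = ∫ τ in (0:ℝ)..s, gg N c γ v τ :=
    intervalIntegral.integral_add_adjacent_intervals (ia.trans ib) ic
  have n1 : 0 ≤ ∫ τ in (0:ℝ)..(1/4), gg N c γ v τ :=
    intervalIntegral.integral_nonneg (by norm_num)
      (fun u hu => gg_nonneg hc.le hv0 u ⟨hu.1, by linarith [hu.2]⟩)
  have n3 : 0 ≤ ∫ τ in b..s, gg N c γ v τ :=
    intervalIntegral.integral_nonneg hbs
      (fun u hu => gg_nonneg hc.le hv0 u ⟨by linarith [hu.1], by linarith [hu.2]⟩)
  have hmono : ∫ τ in (1/4:ℝ)..b, (c * m ^ γ) * ((N:ℝ) * τ ^ (N-1))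
      ≤ ∫ τ in (1/4:ℝ)..b, gg N c γ v τ := by
    apply intervalIntegral.integral_mono_on hb1 _ ib
    · intro τ hτ
      have hτ0 : (0:ℝ) ≤ τ := by linarith [hτ.1]
      have hp : (0:ℝ) ≤ (N:ℝ) * τ ^ (N-1) := by positivity
      have h2 : m ^ γ ≤ v τ ^ γ :=
        Real.rpow_le_rpow hm (hvm τ ⟨hτ.1, le_trans hτ.2 hb2⟩) hγ.le
      calc (c * m ^ γ) * ((N:ℝ) * τ ^ (N-1))
          ≤ (c * v τ ^ γ) * ((N:ℝ) * τ ^ (N-1)) :=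
            mul_le_mul_of_nonneg_right (mul_le_mul_of_nonneg_left h2 hc.le) hp
        _ = gg N c γ v τ := by unfold gg; ring
    · apply Continuous.intervalIntegrable
      exact continuous_const.mul (continuous_const.mul (continuous_pow _))
  have heval : ∫ τ in (1/4:ℝ)..b, (c * m ^ γ) * ((N:ℝ) * τ ^ (N-1))
      = c * m ^ γ * (b ^ N - (1/4:ℝ)^N) := by
    rw [intervalIntegral.integral_const_mul, powInt N hN]
  linarith

lemma ff_nonneg (hc : 0 ≤ c) (hv0 : ∀ t ∈ Icc (0:ℝ) 1, 0 ≤ v t) :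
    ∀ s ∈ Icc (0:ℝ) 1, 0 ≤ ff N c γ v s := fun s hs =>
  Real.rpow_nonneg
    (intervalIntegral.integral_nonneg hs.1
      (fun u hu => gg_nonneg hc hv0 u ⟨hu.1, le_trans hu.2 hs.2⟩)) _

lemma ff_cont (hγ : 0 < γ) (hvc : ContinuousOn v (Icc 0 1)) :
    ContinuousOn (ff N c γ v) (Icc 0 1) := by
  have hG : ContinuousOn (fun s => ∫ τ in (0:ℝ)..s, gg N c γ v τ) (Icc 0 1) := by
    have h : IntegrableOn (gg N c γ v) (uIcc (0:ℝ) 1) := by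
      rw [uIcc_of_le zero_le_one]; exact (gg_cont hγ hvc).integrableOn_Icc
    simpa [uIcc_of_le (zero_le_one : (0:ℝ) ≤ 1)] using
      intervalIntegral.continuousOn_primitive_interval h
  exact hG.rpow_const fun x _ => Or.inr (by positivity)

lemma ff_int (hγ : 0 < γ) (hvc : ContinuousOn v (Icc 0 1)) {a b : ℝ}
    (ha : 0 ≤ a) (hb : b ≤ 1) (hab : a ≤ b) :
    IntervalIntegrable (ff N c γ v) volume a b :=
  ((ff_cont hγ hvc).mono (by rw [uIcc_of_le hab]; exact Icc_subset_Icc ha hb)).intervalIntegrable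

lemma rpow_split (hc : 0 < c) (hm : 0 ≤ m) {X : ℝ} (hX : 0 ≤ X) :
    (c * m ^ γ * X) ^ ((N:ℝ)⁻¹)
      = c ^ ((N:ℝ)⁻¹) * m ^ (γ / (N:ℝ)) * X ^ ((N:ℝ)⁻¹) := by
  rw [Real.mul_rpow (mul_nonneg hc.le (Real.rpow_nonneg hm _)) hX,
    Real.mul_rpow hc.le (Real.rpow_nonneg hm _), ← Real.rpow_mul hm, ← div_eq_mul_inv]

lemma w_nonneg (hc : 0 ≤ c) (hv0 : ∀ t ∈ Icc (0:ℝ) 1, 0 ≤ v t) :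
    ∀ t ∈ Icc (0:ℝ) 1, 0 ≤ MAopc N c γ v t := by
  intro t ht
  rw [MAopc_eq]
  exact intervalIntegral.integral_nonneg ht.2
    (fun u hu => ff_nonneg hc hv0 u ⟨le_trans ht.1 hu.1, hu.2⟩)

lemma w_cont (hγ : 0 < γ) (hvc : ContinuousOn v (Icc 0 1)) :
    ContinuousOn (MAopc N c γ v) (Icc 0 1) := by
  have hfint : IntervalIntegrable (ff N c γ v) volume 0 1 :=
    ff_int hγ hvc le_rfl le_rfl zero_le_one
  have hGprim : ContinuousOn (fun t => ∫ s in (0:ℝ)..t, ff N c γ v s) (Icc 0 1) := by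
    have h : IntegrableOn (ff N c γ v) (uIcc (0:ℝ) 1) := by
      rw [uIcc_of_le zero_le_one]; exact (ff_cont hγ hvc).integrableOn_Icc
    simpa [uIcc_of_le (zero_le_one : (0:ℝ) ≤ 1)] using
      intervalIntegral.continuousOn_primitive_interval h
  apply (continuousOn_const.sub hGprim).congr
  intro t ht
  have h2 : IntervalIntegrable (ff N c γ v) volume 0 t := ff_int hγ hvc le_rfl ht.2 ht.1
  rw [MAopc_eq]
  exact (intervalIntegral.integral_interval_sub_left hfint h2).symm

lemma lemA (hN : 2 ≤ N) (hc : 0 < c) (hγ : 0 < γ) (hm : 0 ≤ m)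
    (hvc : ContinuousOn v (Icc 0 1)) (hv0 : ∀ t ∈ Icc (0:ℝ) 1, 0 ≤ v t)
    (hvm : ∀ t ∈ Icc (1/4:ℝ) (3/4), m ≤ v t) :
    c ^ ((N:ℝ)⁻¹) * m ^ (γ / (N:ℝ)) * Gam N ≤ MAopc N c γ v (1/4) := by
  rw [MAopc_eq]
  have split : (∫ s in (1/4:ℝ)..(3/4), ff N c γ v s) + (∫ s in (3/4:ℝ)..1, ff N c γ v s)
      = ∫ s in (1/4:ℝ)..1, ff N c γ v s :=
    intervalIntegral.integral_add_adjacent_intervals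
      (ff_int hγ hvc (by norm_num) (by norm_num) (by norm_num))
      (ff_int hγ hvc (by norm_num) le_rfl (by norm_num))
  have n2 : 0 ≤ ∫ s in (3/4:ℝ)..1, ff N c γ v s :=
    intervalIntegral.integral_nonneg (by norm_num)
      (fun u hu => ff_nonneg hc.le hv0 u ⟨by linarith [hu.1], hu.2⟩)
  have hmono : ∫ s in (1/4:ℝ)..(3/4),
        (c ^ ((N:ℝ)⁻¹) * m ^ (γ / (N:ℝ))) * ((s^N - (1/4:ℝ)^N) ^ ((N:ℝ)⁻¹))
      ≤ ∫ s in (1/4:ℝ)..(3/4), ff N c γ v s := by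
    apply intervalIntegral.integral_mono_on (by norm_num) _
      (ff_int hγ hvc (by norm_num) (by norm_num) (by norm_num))
    · intro s hs
      have hX : (0:ℝ) ≤ s^N - (1/4:ℝ)^N := by
        have := pow_le_pow_left₀ (by norm_num : (0:ℝ) ≤ 1/4) hs.1 N; linarith
      have hlb := inner_lb hN hc hγ hm hvc hv0 hvm hs.1 hs.2 le_rfl (by linarith [hs.2])
      have h3 := Real.rpow_le_rpow (mul_nonneg (by positivity) hX) hlb
        (by positivity : (0:ℝ) ≤ (N:ℝ)⁻¹)
      rw [rpow_split hc hm hX] at h3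
      exact h3
    · apply Continuous.intervalIntegrable
      exact continuous_const.mul
        (Continuous.rpow_const (by continuity) (fun x => Or.inr (by positivity)))
  have heval : ∫ s in (1/4:ℝ)..(3/4),
        (c ^ ((N:ℝ)⁻¹) * m ^ (γ / (N:ℝ))) * ((s^N - (1/4:ℝ)^N) ^ ((N:ℝ)⁻¹))
      = c ^ ((N:ℝ)⁻¹) * m ^ (γ / (N:ℝ)) * Gam N := by
    rw [intervalIntegral.integral_const_mul, Gam_eq N hN]
  linarith

lemma lemB (hN : 2 ≤ N) (hc : 0 < c) (hγ : 0 < γ) (hm : 0 ≤ m)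
    (hvc : ContinuousOn v (Icc 0 1)) (hv0 : ∀ t ∈ Icc (0:ℝ) 1, 0 ≤ v t)
    (hvm : ∀ t ∈ Icc (1/4:ℝ) (3/4), m ≤ v t) :
    ∀ t ∈ Icc (1/4:ℝ) (3/4),
      (1/4) * (c ^ ((N:ℝ)⁻¹) * m ^ (γ / (N:ℝ)) * Gam N) ≤ MAopc N c γ v t := by
  intro t ht
  set K : ℝ := (3/4:ℝ)^N - (1/4:ℝ)^N with hKdef
  have hK0 : (0:ℝ) ≤ K := by
    have := pow_le_pow_left₀ (by norm_num : (0:ℝ) ≤ 1/4) (by norm_num : (1/4:ℝ) ≤ 3/4) N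
    rw [hKdef]; linarith
  have hKrpow : (0:ℝ) ≤ K ^ ((N:ℝ)⁻¹) := Real.rpow_nonneg hK0 _
  have hΓ : Gam N ≤ K ^ ((N:ℝ)⁻¹) := by
    have h1 : Gam N ≤ ∫ _s in (1/4:ℝ)..(3/4), K ^ ((N:ℝ)⁻¹) := by
      rw [Gam_eq N hN]
      apply intervalIntegral.integral_mono_on (by norm_num)
      · apply Continuous.intervalIntegrable
        exact Continuous.rpow_const (by continuity) (fun x => Or.inr (by positivity))
      · exact intervalIntegrable_const
      · intro s hs
        apply Real.rpow_le_rpow _ _ (by positivity)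
        · have := pow_le_pow_left₀ (by norm_num : (0:ℝ) ≤ 1/4) hs.1 N; linarith
        · have hs0 : (0:ℝ) ≤ s := by linarith [hs.1]
          have := pow_le_pow_left₀ hs0 hs.2 N
          rw [hKdef]; linarith
    rw [intervalIntegral.integral_const, smul_eq_mul] at h1
    nlinarith
  rw [MAopc_eq]
  have split : (∫ s in t..(3/4:ℝ), ff N c γ v s) + (∫ s in (3/4:ℝ)..1, ff N c γ v s)
      = ∫ s in t..(1:ℝ), ff N c γ v s :=
    intervalIntegral.integral_add_adjacent_intervals
      (ff_int hγ hvc (by linarith [ht.1]) (by norm_num) ht.2)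
      (ff_int hγ hvc (by norm_num) le_rfl (by norm_num))
  have n1 : 0 ≤ ∫ s in t..(3/4:ℝ), ff N c γ v s :=
    intervalIntegral.integral_nonneg ht.2
      (fun u hu => ff_nonneg hc.le hv0 u ⟨by linarith [hu.1, ht.1], by linarith [hu.2]⟩)
  have hmono : ∫ _s in (3/4:ℝ)..1, (c ^ ((N:ℝ)⁻¹) * m ^ (γ / (N:ℝ)) * K ^ ((N:ℝ)⁻¹))
      ≤ ∫ s in (3/4:ℝ)..1, ff N c γ v s := by
    apply intervalIntegral.integral_mono_on (by norm_num) intervalIntegrable_const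
      (ff_int hγ hvc (by norm_num) le_rfl (by norm_num))
    intro s hs
    have hlb := inner_lb hN hc hγ hm hvc hv0 hvm (b := 3/4) (by norm_num) le_rfl hs.1 hs.2
    have h3 := Real.rpow_le_rpow (by positivity) hlb (by positivity : (0:ℝ) ≤ (N:ℝ)⁻¹)
    rw [rpow_split hc hm hK0] at h3
    exact h3
  have heval : ∫ _s in (3/4:ℝ)..1, (c ^ ((N:ℝ)⁻¹) * m ^ (γ / (N:ℝ)) * K ^ ((N:ℝ)⁻¹))
      = (1/4) * (c ^ ((N:ℝ)⁻¹) * m ^ (γ / (N:ℝ)) * K ^ ((N:ℝ)⁻¹)) := by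
    rw [intervalIntegral.integral_const, smul_eq_mul]; norm_num
  have hcm : 0 ≤ c ^ ((N:ℝ)⁻¹) * m ^ (γ / (N:ℝ)) :=
    mul_nonneg (Real.rpow_nonneg hc.le _) (Real.rpow_nonneg hm _)
  nlinarith

end Stmt13Aux

open Stmt13Aux in
theorem stmt13 (N : ℕ) (hN : 2 ≤ N) (α β lam mu : ℝ)
    (hα : 0 < α) (hβ : 0 < β) (hlam : 0 < lam) (hmu : 0 < mu)
    (hαβ : α * β = (N:ℝ) ^ 2)
    (v : ℝ → ℝ) (hv : memK v) (hne : ∃ t ∈ Icc (0:ℝ) 1, v t ≠ 0)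
    (hfix : ∀ t ∈ Icc (0:ℝ) 1, MAopc N lam α (MAopc N mu β v) t = v t) :
    lam ^ ((N:ℝ)⁻¹) * mu ^ (α / (N:ℝ) ^ 2) * (Gam N / 4) ^ (1 + α / N) ≤ 1 := by
  obtain ⟨hvc, hv0, hvq⟩ := hv
  have hΓ0 : 0 ≤ Gam N := Gam_nonneg N hN
  rcases hΓ0.eq_or_lt with hΓz | hΓp
  · rw [← hΓz]
    norm_num
    rw [Real.zero_rpow (by positivity : (1:ℝ) + α / (N:ℝ) ≠ 0)]
    norm_num
  · set M := supNorm v with hMdef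
    have hbdd : BddAbove ((fun t => |v t|) '' Icc (0:ℝ) 1) :=
      (isCompact_Icc.image_of_continuousOn hvc.abs).bddAbove
    have hle : ∀ t ∈ Icc (0:ℝ) 1, v t ≤ M := fun t ht =>
      (le_abs_self _).trans (le_csSup hbdd ⟨t, ht, rfl⟩)
    have hM : 0 < M := by
      obtain ⟨t0, ht0, h0⟩ := hne
      have h1 : 0 < v t0 := (hv0 t0 ht0).lt_of_ne (Ne.symm h0)
      exact h1.trans_le (hle t0 ht0)
    have hM4 : (0:ℝ) ≤ M / 4 := by linarith
    set w := MAopc N mu β v with hwdef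
    have hwc : ContinuousOn w (Icc 0 1) := w_cont hβ hvc
    have hw0 : ∀ t ∈ Icc (0:ℝ) 1, 0 ≤ w t := w_nonneg hmu.le hv0
    have hwm := lemB hN hmu hβ hM4 hvc hv0 (fun t ht => by
      have := hvq t ht; linarith)
    set mw := (1/4) * (mu ^ ((N:ℝ)⁻¹) * (M/4) ^ (β / (N:ℝ)) * Gam N) with hmwdef
    have hmw0 : 0 ≤ mw := by
      apply mul_nonneg (by norm_num)
      exact mul_nonneg (mul_nonneg (Real.rpow_nonneg hmu.le _) (Real.rpow_nonneg hM4 _)) hΓ0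
    have hA := lemA hN hlam hα hmw0 hwc hw0 hwm
    rw [hfix (1/4) (by norm_num)] at hA
    have hA' : lam ^ ((N:ℝ)⁻¹) * mw ^ (α / (N:ℝ)) * Gam N ≤ M :=
      hA.trans (hle (1/4) (by norm_num))
    have hN0 : (N:ℝ) ≠ 0 := Nat.cast_ne_zero.mpr (by omega)
    have e1 : mw = mu ^ ((N:ℝ)⁻¹) * (M/4) ^ (β / (N:ℝ)) * (Gam N / 4) := by
      rw [hmwdef]; ring
    have s1 : ((N:ℝ))⁻¹ * (α / (N:ℝ)) = α / (N:ℝ)^2 := by field_simp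
    have s2 : (β / (N:ℝ)) * (α / (N:ℝ)) = 1 := by
      field_simp
      linear_combination hαβ
    have e2 : mw ^ (α / (N:ℝ))
        = mu ^ (α / (N:ℝ)^2) * (M/4) * (Gam N / 4) ^ (α / (N:ℝ)) := by
      rw [e1, Real.mul_rpow
          (mul_nonneg (Real.rpow_nonneg hmu.le _) (Real.rpow_nonneg hM4 _)) (by positivity),
        Real.mul_rpow (Real.rpow_nonneg hmu.le _) (Real.rpow_nonneg hM4 _),
        ← Real.rpow_mul hmu.le, ← Real.rpow_mul hM4, s1, s2, Real.rpow_one]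
    have e3 : (Gam N / 4) ^ ((1:ℝ) + α / (N:ℝ))
        = (Gam N / 4) * (Gam N / 4) ^ (α / (N:ℝ)) := by
      rw [Real.rpow_add (by positivity), Real.rpow_one]
    have key : lam ^ ((N:ℝ)⁻¹) * mu ^ (α / (N:ℝ)^2) * (Gam N / 4) ^ ((1:ℝ) + α / (N:ℝ)) * M
        = lam ^ ((N:ℝ)⁻¹) * mw ^ (α / (N:ℝ)) * Gam N := by
      rw [e2, e3]; ring
    have hfin : lam ^ ((N:ℝ)⁻¹) * mu ^ (α / (N:ℝ)^2)
        * (Gam N / 4) ^ ((1:ℝ) + α / (N:ℝ)) * M ≤ 1 * M := by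
      rw [key, one_mul]; exact hA'
    exact le_of_mul_le_mul_right hfin hM
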